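/- exp(x − x²/2) ≤ 1 + x + (max(−x,0))³/3 for all real x; consequently, for any random variable X with E X = 0 and E|X|³ < ∞, E exp{λX − (λ²/2)X²} ≤ exp{(λ³/3)·E(max(−X,0))³} for all λ ≥ 0. -/

import Mathlib

open MeasureTheory

private lemma exp_le_one_aux (y : ℝ) (hy : y ≤ 0) : Real.exp y ≤ 1 := by
  simpa using Real.exp_le_exp.2 hy

private lemma auxg : Monotone (fun x : ℝ => 1 + x - Real.exp (x - x ^ 2 / 2)) := by
  apply monotone_of_deriv_nonneg
  · fun_prop
  · intro x
    have h1 : HasDerivAt (fun x : ℝ => x - x ^ 2 / 2) (1 - x) x := by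
      have := (hasDerivAt_id x).sub ((hasDerivAt_pow 2 x).div_const 2)
      exact this.congr_deriv (by norm_num)
    have hD : HasDerivAt (fun x : ℝ => 1 + x - Real.exp (x - x ^ 2 / 2))
        (1 - (1 - x) * Real.exp (x - x ^ 2 / 2)) x := by
      have h3 := ((hasDerivAt_const x (1 : ℝ)).add (hasDerivAt_id x)).sub h1.exp
      exact h3.congr_deriv (by ring)
    rw [hD.deriv]
    have hle : (1 - x) * Real.exp (x - x ^ 2 / 2)
        ≤ Real.exp (-x) * Real.exp (x - x ^ 2 / 2) := by
      apply mul_le_mul_of_nonneg_right _ (Real.exp_pos _).le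
      linarith [Real.add_one_le_exp (-x)]
    rw [← Real.exp_add] at hle
    have h2 : Real.exp (-x + (x - x ^ 2 / 2)) ≤ 1 := by
      apply exp_le_one_aux; nlinarith [sq_nonneg x]
    linarith

private lemma auxp : Monotone (fun t : ℝ => Real.exp (-t - t ^ 2 / 2) - (1 - t)) := by
  apply monotone_of_deriv_nonneg
  · fun_prop
  · intro t
    have h1 : HasDerivAt (fun t : ℝ => -t - t ^ 2 / 2) (-1 - t) t := by
      have := ((hasDerivAt_id t).neg).sub ((hasDerivAt_pow 2 t).div_const 2)
      exact this.congr_deriv (by norm_num)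
    have hD : HasDerivAt (fun t : ℝ => Real.exp (-t - t ^ 2 / 2) - (1 - t))
        ((-1 - t) * Real.exp (-t - t ^ 2 / 2) + 1) t := by
      have h3 := h1.exp.sub ((hasDerivAt_const t (1 : ℝ)).sub (hasDerivAt_id t))
      exact h3.congr_deriv (by ring)
    rw [hD.deriv]
    have hle : (1 + t) * Real.exp (-t - t ^ 2 / 2)
        ≤ Real.exp t * Real.exp (-t - t ^ 2 / 2) := by
      apply mul_le_mul_of_nonneg_right _ (Real.exp_pos _).le
      linarith [Real.add_one_le_exp t]
    rw [← Real.exp_add] at hle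
    have h2 : Real.exp (t + (-t - t ^ 2 / 2)) ≤ 1 := by
      apply exp_le_one_aux; nlinarith [sq_nonneg t]
    nlinarith

private lemma auxp' (t : ℝ) (ht : 0 ≤ t) : 1 - t ≤ Real.exp (-t - t ^ 2 / 2) := by
  have := auxp ht
  simp only at this
  norm_num at this
  linarith

private lemma auxh : MonotoneOn
    (fun t : ℝ => 1 - t + t ^ 3 / 3 - Real.exp (-t - t ^ 2 / 2)) (Set.Ici 0) := by
  apply monotoneOn_of_deriv_nonneg (convex_Ici 0)
  · fun_prop
  · apply Differentiable.differentiableOn; fun_prop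
  · intro t ht
    rw [interior_Ici] at ht
    have ht0 : (0 : ℝ) < t := ht
    have h1 : HasDerivAt (fun t : ℝ => -t - t ^ 2 / 2) (-1 - t) t := by
      have := ((hasDerivAt_id t).neg).sub ((hasDerivAt_pow 2 t).div_const 2)
      exact this.congr_deriv (by norm_num)
    have hD : HasDerivAt (fun t : ℝ => 1 - t + t ^ 3 / 3 - Real.exp (-t - t ^ 2 / 2))
        (-1 + t ^ 2 + (1 + t) * Real.exp (-t - t ^ 2 / 2)) t := by
      have hpoly : HasDerivAt (fun t : ℝ => 1 - t + t ^ 3 / 3) (-1 + t ^ 2) t := by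
        have := (((hasDerivAt_const t (1 : ℝ)).sub (hasDerivAt_id t)).add
          ((hasDerivAt_pow 3 t).div_const 3))
        exact this.congr_deriv (by norm_num)
      have h3 := hpoly.sub h1.exp
      have : -1 + t ^ 2 - Real.exp (-t - t ^ 2 / 2) * (-1 - t)
          = -1 + t ^ 2 + (1 + t) * Real.exp (-t - t ^ 2 / 2) := by ring
      exact h3.congr_deriv (by rw [this])
    rw [hD.deriv]
    have h2 : (1 + t) * (1 - t) ≤ (1 + t) * Real.exp (-t - t ^ 2 / 2) :=
      mul_le_mul_of_nonneg_left (auxp' t ht0.le) (by linarith)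
    nlinarith

private lemma scalar (x : ℝ) :
    Real.exp (x - x ^ 2 / 2) ≤ 1 + x + max (-x) 0 ^ 3 / 3 := by
  rcases le_or_gt 0 x with hx | hx
  · have hmax : max (-x) 0 = 0 := max_eq_right (by linarith)
    rw [hmax]
    have := auxg hx
    simp only at this
    norm_num at this
    linarith
  · set t := -x with ht
    have htpos : 0 < t := by simp [ht]; linarith
    have hmax : max (-x) 0 = t := max_eq_left (by linarith)
    have := auxh (Set.self_mem_Ici) (Set.mem_Ici.2 htpos.le) htpos.le
    simp only at this
    norm_num at this
    have hx' : x - x ^ 2 / 2 = -t - t ^ 2 / 2 := by rw [ht]; ring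
    rw [hx', hmax]
    have hxt : x = -t := by rw [ht]; ring
    rw [hxt]
    linarith

theorem fan_cubic_inequality :
    (∀ x : ℝ, Real.exp (x - x ^ 2 / 2) ≤ 1 + x + max (-x) 0 ^ 3 / 3) ∧
    (∀ {Ω : Type} {mΩ : MeasurableSpace Ω} (μ : Measure Ω) [IsProbabilityMeasure μ]
      (X : Ω → ℝ), Measurable X → Integrable X μ →
      Integrable (fun ω => |X ω| ^ 3) μ → (∫ ω, X ω ∂μ) = 0 →
      ∀ lam : ℝ, 0 ≤ lam →
        (∫ ω, Real.exp (lam * X ω - lam ^ 2 / 2 * X ω ^ 2) ∂μ)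
          ≤ Real.exp (lam ^ 3 / 3 * ∫ ω, max (-X ω) 0 ^ 3 ∂μ)) := by
  constructor
  · exact scalar
  · intro Ω mΩ μ _ X hXm hXint hX3int hXmean lam hlam
    -- pointwise bound
    have key : ∀ ω, Real.exp (lam * X ω - lam ^ 2 / 2 * X ω ^ 2)
        ≤ 1 + lam * X ω + lam ^ 3 * max (-X ω) 0 ^ 3 / 3 := by
      intro ω
      have h := scalar (lam * X ω)
      have harg : lam * X ω - (lam * X ω) ^ 2 / 2
          = lam * X ω - lam ^ 2 / 2 * X ω ^ 2 := by ring
      have hmax : max (-(lam * X ω)) 0 = lam * max (-X ω) 0 := by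
        rw [mul_max_of_nonneg _ _ hlam, mul_zero, mul_neg]
      rw [harg, hmax, mul_pow] at h
      linarith
    -- integrability of LHS
    have hmeasL : Measurable fun ω => Real.exp (lam * X ω - lam ^ 2 / 2 * X ω ^ 2) := by
      fun_prop
    have hintL : Integrable (fun ω => Real.exp (lam * X ω - lam ^ 2 / 2 * X ω ^ 2)) μ := by
      apply Integrable.mono' (integrable_const (Real.exp (1 / 2)))
        hmeasL.aestronglyMeasurable
      filter_upwards with ω
      rw [Real.norm_eq_abs, abs_of_pos (Real.exp_pos _)]
      apply Real.exp_le_exp.2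
      nlinarith [sq_nonneg (lam * X ω - 1)]
    -- integrability of max(-X,0)^3
    have hmeasM : Measurable fun ω => max (-X ω) 0 ^ 3 := by fun_prop
    have hintM : Integrable (fun ω => max (-X ω) 0 ^ 3) μ := by
      apply Integrable.mono' hX3int hmeasM.aestronglyMeasurable
      filter_upwards with ω
      have h1 : (0 : ℝ) ≤ max (-X ω) 0 := le_max_right _ _
      have h2 : max (-X ω) 0 ≤ |X ω| := by
        apply max_le _ (abs_nonneg _)
        exact (neg_le_abs _)
      rw [Real.norm_eq_abs, abs_of_nonneg (pow_nonneg h1 3)]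
      exact pow_le_pow_left₀ h1 h2 3
    -- integrability of RHS
    have hintR : Integrable
        (fun ω => 1 + lam * X ω + lam ^ 3 * max (-X ω) 0 ^ 3 / 3) μ := by
      apply Integrable.add
      · exact (integrable_const 1).add (hXint.const_mul lam)
      · have := hintM.const_mul (lam ^ 3 / 3)
        refine this.congr (ae_of_all _ fun ω => ?_)
        ring
    calc (∫ ω, Real.exp (lam * X ω - lam ^ 2 / 2 * X ω ^ 2) ∂μ)
        ≤ ∫ ω, (1 + lam * X ω + lam ^ 3 * max (-X ω) 0 ^ 3 / 3) ∂μ :=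
          integral_mono hintL hintR key
      _ = 1 + lam ^ 3 / 3 * ∫ ω, max (-X ω) 0 ^ 3 ∂μ := by
          have hi1 : Integrable (fun ω => 1 + lam * X ω) μ := by
            exact (integrable_const 1).add (hXint.const_mul lam)
          have hi1' : Integrable (fun ω => lam * X ω) μ := by
            exact hXint.const_mul lam
          have hi2 : Integrable (fun ω => lam ^ 3 / 3 * max (-X ω) 0 ^ 3) μ := by
            exact hintM.const_mul _
          have hfeq : ∀ ω, 1 + lam * X ω + lam ^ 3 * max (-X ω) 0 ^ 3 / 3
              = (1 + lam * X ω) + lam ^ 3 / 3 * max (-X ω) 0 ^ 3 := fun ω => by ring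
          simp_rw [hfeq]
          rw [integral_add hi1 hi2, integral_add (integrable_const 1) hi1',
            integral_const_mul, integral_const_mul, hXmean]
          simp
      _ ≤ Real.exp (lam ^ 3 / 3 * ∫ ω, max (-X ω) 0 ^ 3 ∂μ) := by
          have := Real.add_one_le_exp (lam ^ 3 / 3 * ∫ ω, max (-X ω) 0 ^ 3 ∂μ)
          linarith
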